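/- Let H be a real separable Hilbert space and let S ⊆ H be a nonempty closed ball-compact set (S ∩ r𝔹 is compact for every r>0). Then for every u ∈ H with u ∉ S, the Clarke subdifferential of the distance function satisfies ∂d_S(u) = (u − cl co Proj_S(u)) / d_S(u), i.e. ∂d_S(u) = { (u − p)/d_S(u) : p ∈ cl co Proj_S(u) }. -/

import Mathlib

open Metric Set MeasureTheory Filter Pointwise

noncomputable section

variable {H : Type} [NormedAddCommGroup H] [InnerProductSpace ℝ H]

/-- The Clarke generalized directional derivative of `f` at `x` in direction `h`. -/
def clarkeDeriv (f : H → ℝ) (x h : H) : ℝ :=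
  Filter.limsup (fun p : H × ℝ => (f (p.1 + p.2 • h) - f p.1) / p.2)
    ((nhds x) ×ˢ (nhdsWithin 0 (Ioi (0:ℝ))))

/-- The Clarke subdifferential of `f` at `x`. -/
def clarkeSubdiff (f : H → ℝ) (x : H) : Set H :=
  {v : H | ∀ h : H, (inner ℝ v h : ℝ) ≤ clarkeDeriv f x h}

/-- The closure of a set with respect to the weak topology of `H`. -/
def weakClosure (A : Set H) : Set H :=
  (toWeakSpace ℝ H) ⁻¹' (closure ((toWeakSpace ℝ H) '' A))

/-- The Clarke normal cone to `S` at `x`: the weak closure of `ℝ₊ ∂d_S(x)`. -/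
def clarkeNormalCone (S : Set H) (x : H) : Set H :=
  weakClosure {w : H | ∃ l : ℝ, ∃ v ∈ clarkeSubdiff (fun u => infDist u S) x,
    0 ≤ l ∧ w = l • v}

/-- The (possibly empty) set of nearest points of `x` in `S`. -/
def projSet (S : Set H) (x : H) : Set H :=
  {y ∈ S | ‖x - y‖ = infDist x S}

/-- A family of closed sets is equi-uniformly subsmooth. -/
def EquiUniformlySubsmooth {ι : Sort*} (S : ι → Set H) : Prop :=
  ∀ ε > (0:ℝ), ∃ δ > (0:ℝ), ∀ j : ι, ∀ x₁ ∈ S j, ∀ x₂ ∈ S j, ‖x₁ - x₂‖ < δ →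
    ∀ v₁ ∈ clarkeNormalCone (S j) x₁ ∩ closedBall 0 1,
    ∀ v₂ ∈ clarkeNormalCone (S j) x₂ ∩ closedBall 0 1,
      -ε * ‖x₁ - x₂‖ ≤ (inner ℝ (v₁ - v₂) (x₁ - x₂) : ℝ)

/-- The Hausdorff measure of non-compactness of a set. -/
def hausMNC (A : Set H) : ℝ :=
  sInf {r : ℝ | 0 < r ∧ ∃ F : Finset H, A ⊆ ⋃ c ∈ F, closedBall c r}

/-- `v` is the derivative of the absolutely continuous function `x` on `[0,T]`. -/
def IsACDerivOn {E : Type} [NormedAddCommGroup E] [NormedSpace ℝ E] (T : ℝ)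
    (x v : ℝ → E) : Prop :=
  IntegrableOn v (Icc 0 T) volume ∧ ∀ t ∈ Icc 0 T, x t = x 0 + ∫ s in (0:ℝ)..t, v s

theorem aux_exists_proj (S : Set H) (hne : S.Nonempty)
    (hbc : ∀ r : ℝ, 0 < r → IsCompact (S ∩ closedBall (0:H) r)) (x : H) :
    ∃ p, p ∈ projSet S x := by
  set r : ℝ := ‖x‖ + infDist x S + 1 with hr
  have hd0 : 0 ≤ infDist x S := infDist_nonneg
  have hrpos : 0 < r := by positivity
  have hK := hbc r hrpos
  have hmem : ∀ s ∈ S, dist x s ≤ infDist x S + 1 → s ∈ S ∩ closedBall (0:H) r := by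
    intro s hs hds
    refine ⟨hs, mem_closedBall.2 ?_⟩
    have : dist s x ≤ infDist x S + 1 := by rwa [dist_comm]
    calc dist s (0:H) ≤ dist s x + dist x 0 := dist_triangle _ _ _
      _ ≤ (infDist x S + 1) + ‖x‖ := by
          simp only [dist_zero_right]; linarith
      _ = r := by ring
  have hKne : (S ∩ closedBall (0:H) r).Nonempty := by
    obtain ⟨s, hs, hds⟩ := (infDist_lt_iff hne).1
      (show infDist x S < infDist x S + 1 by linarith)
    exact ⟨s, hmem s hs hds.le⟩
  obtain ⟨y, hy, hdy⟩ := hK.exists_infDist_eq_dist hKne x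
  refine ⟨y, hy.1, ?_⟩
  rw [← dist_eq_norm]
  have h1 : infDist x S ≤ dist x y := infDist_le_dist_of_mem hy.1
  have h2 : dist x y ≤ infDist x S := by
    rw [← hdy]
    refine le_of_forall_pos_le_add ?_
    intro ε hε
    obtain ⟨s, hs, hds⟩ := (infDist_lt_iff hne).1
      (show infDist x S < infDist x S + min ε 1 by
        have := lt_min hε one_pos; linarith)
    have hs' : s ∈ S ∩ closedBall (0:H) r :=
      hmem s hs (hds.le.trans (by have := min_le_right ε (1:ℝ); linarith))
    calc infDist x (S ∩ closedBall (0:H) r) ≤ dist x s := infDist_le_dist_of_mem hs'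
      _ ≤ infDist x S + ε := by have := min_le_left ε (1:ℝ); linarith
  linarith

theorem aux_proj_subseq (S : Set H)
    (hbc : ∀ r : ℝ, 0 < r → IsCompact (S ∩ closedBall (0:H) r))
    (z : ℕ → H) (z' : H) (hz : Tendsto z atTop (nhds z'))
    (s : ℕ → H) (hs : ∀ n, s n ∈ projSet S (z n)) :
    ∃ p ∈ projSet S z', ∃ φ : ℕ → ℕ, StrictMono φ ∧
      Tendsto (s ∘ φ) atTop (nhds p) := by
  -- the z n are bounded
  obtain ⟨C, hC⟩ : ∃ C : ℝ, ∀ n, ‖z n‖ ≤ C := by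
    have : Bornology.IsBounded (range z) := isBounded_range_of_tendsto z hz
    obtain ⟨C, hC⟩ := this.exists_norm_le
    exact ⟨C, fun n => hC _ (mem_range_self n)⟩
  set r : ℝ := C + (infDist z' S + (C + ‖z'‖)) + 1 with hrdef
  have hC0 : 0 ≤ C := le_trans (norm_nonneg _) (hC 0)
  have hrpos : 0 < r := by
    have := @infDist_nonneg _ _ S z'
    positivity
  have hsK : ∀ n, s n ∈ S ∩ closedBall (0:H) r := by
    intro n
    refine ⟨(hs n).1, mem_closedBall.2 ?_⟩
    have h1 : dist (z n) (s n) = infDist (z n) S := by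
      rw [dist_eq_norm]; exact (hs n).2
    have h2 : infDist (z n) S ≤ infDist z' S + dist (z n) z' :=
      infDist_le_infDist_add_dist
    have h3 : dist (z n) z' ≤ ‖z n‖ + ‖z'‖ := by
      rw [dist_eq_norm]; exact norm_sub_le _ _
    calc dist (s n) (0:H) ≤ dist (s n) (z n) + dist (z n) (0:H) := dist_triangle _ _ _
      _ = dist (z n) (s n) + ‖z n‖ := by rw [dist_comm, dist_zero_right]
      _ ≤ (infDist z' S + (C + ‖z'‖)) + C := by
          have := hC n; linarith
      _ ≤ r := by rw [hrdef]; linarith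
  obtain ⟨p, hpK, φ, hφ, hconv⟩ := (hbc r hrpos).tendsto_subseq hsK
  refine ⟨p, ⟨hpK.1, ?_⟩, φ, hφ, hconv⟩
  have hzφ : Tendsto (z ∘ φ) atTop (nhds z') := hz.comp hφ.tendsto_atTop
  have h1 : Tendsto (fun n => dist (z (φ n)) (s (φ n))) atTop (nhds (dist z' p)) :=
    hzφ.dist hconv
  have h2 : Tendsto (fun n => dist (z (φ n)) (s (φ n))) atTop (nhds (infDist z' S)) := by
    have : Tendsto (fun n => infDist (z (φ n)) S) atTop (nhds (infDist z' S)) :=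
      ((continuous_infDist_pt S).tendsto z').comp hzφ
    refine this.congr fun n => ?_
    rw [dist_eq_norm]; exact ((hs (φ n)).2).symm
  have := tendsto_nhds_unique h1 h2
  rw [dist_eq_norm] at this
  exact this

theorem aux_seg (S : Set H) (u p : H) (hp : p ∈ projSet S u)
    (hd : 0 < infDist u S) (t : ℝ) (ht0 : 0 < t) (ht1 : t < 1) :
    infDist (u + t • (p - u)) S = (1 - t) * infDist u S ∧
    ∀ s ∈ projSet S (u + t • (p - u)), s = p := by
  set d := infDist u S with hddef
  set y := u + t • (p - u) with hydef
  have hup : ‖u - p‖ = d := hp.2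
  have hyp : y - p = (1 - t) • (u - p) := by
    rw [hydef]; module
  have huy : u - y = t • (u - p) := by
    rw [hydef]; module
  have hnyp : ‖y - p‖ = (1 - t) * d := by
    rw [hyp, norm_smul, Real.norm_eq_abs, abs_of_pos (by linarith), hup]
  have hnuy : ‖u - y‖ = t * d := by
    rw [huy, norm_smul, Real.norm_eq_abs, abs_of_pos ht0, hup]
  have hle : infDist y S ≤ (1 - t) * d := by
    have := infDist_le_dist_of_mem (x := y) hp.1
    rw [dist_eq_norm] at this
    rw [← hnyp]; exact this
  have hge : (1 - t) * d ≤ infDist y S := by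
    have h1 : infDist u S ≤ infDist y S + dist u y := infDist_le_infDist_add_dist
    rw [dist_eq_norm, hnuy] at h1
    have : d ≤ infDist y S + t * d := h1
    linarith
  have hdy : infDist y S = (1 - t) * d := le_antisymm hle hge
  refine ⟨hdy, ?_⟩
  intro s hsmem
  have hys : ‖y - s‖ = (1 - t) * d := by rw [hsmem.2, hdy]
  have hus_le : ‖u - s‖ ≤ d := by
    calc ‖u - s‖ = ‖(u - y) + (y - s)‖ := by abel_nf
      _ ≤ ‖u - y‖ + ‖y - s‖ := norm_add_le _ _
      _ = d := by rw [hnuy, hys]; ring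
  have hus_ge : d ≤ ‖u - s‖ := by
    have := infDist_le_dist_of_mem (x := u) hsmem.1
    rw [dist_eq_norm] at this; exact this
  have hus : ‖u - s‖ = d := le_antisymm hus_le hus_ge
  -- expand ‖u - s‖² and get equality in Cauchy-Schwarz
  have hexp : ‖u - s‖^2 = ‖u - y‖^2 + 2 * (inner ℝ (u - y) (y - s) : ℝ) + ‖y - s‖^2 := by
    have : u - s = (u - y) + (y - s) := by abel
    rw [this, @norm_add_sq_real]
  have hinner : (inner ℝ (u - y) (y - s) : ℝ) = ‖u - y‖ * ‖y - s‖ := by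
    rw [hnuy, hys]
    rw [hus, hnuy, hys] at hexp
    nlinarith
  have hcs := inner_eq_norm_mul_iff_real.1 hinner
  -- ‖y-s‖ • (u-y) = ‖u-y‖ • (y-s)
  rw [hnuy, hys, huy] at hcs
  -- ((1-t)*d) • (t • (u - p)) = (t*d) • (y - s)
  have htd : (0:ℝ) < t * d := mul_pos ht0 hd
  have : y - s = (1 - t) • (u - p) := by
    have h2 : ((1 - t) * d) • t • (u - p) = (t * d) • ((1 - t) • (u - p)) := by
      rw [smul_smul, smul_smul]; ring_nf
    rw [h2] at hcs
    exact (smul_right_injective H (ne_of_gt htd) hcs).symm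
  have : y - s = y - p := by rw [this, ← hyp]
  exact sub_right_injective this

theorem aux_usc (S : Set H)
    (hbc : ∀ r : ℝ, 0 < r → IsCompact (S ∩ closedBall (0:H) r))
    (u : H) : ∀ ε > (0:ℝ), ∃ δ > (0:ℝ), ∀ y : H, dist y u < δ →
      ∀ s ∈ projSet S y, ∃ p ∈ projSet S u, ‖s - p‖ < ε := by
  intro ε hε
  by_contra hcon
  push_neg at hcon
  have hstep : ∀ n : ℕ, ∃ y : H, dist y u < 1/(n+1) ∧
      ∃ s ∈ projSet S y, ∀ p ∈ projSet S u, ε ≤ ‖s - p‖ := by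
    intro n
    obtain ⟨y, hy1, s, hs1, hs2⟩ := hcon (1/(n+1)) (by positivity)
    exact ⟨y, hy1, s, hs1, fun p hp => hs2 p hp⟩
  choose y hy s hs hfar using hstep
  have hz : Tendsto y atTop (nhds u) := by
    rw [tendsto_iff_dist_tendsto_zero]
    refine squeeze_zero (fun n => dist_nonneg) (fun n => (hy n).le) ?_
    exact tendsto_one_div_add_atTop_nhds_zero_nat
  obtain ⟨p, hpmem, φ, hφ, hconv⟩ := aux_proj_subseq S hbc y u hz s hs
  have hlim : Tendsto (fun n => ‖s (φ n) - p‖) atTop (nhds 0) := by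
    have := hconv.sub_const p
    simpa using this.norm
  have : ε ≤ 0 := ge_of_tendsto hlim (Eventually.of_forall fun n => hfar (φ n) p hpmem)
  linarith

theorem aux_norm_add_ge (a w : H) (ha : a ≠ 0) :
    ‖a‖ + (inner ℝ ((‖a‖⁻¹ : ℝ) • a) w : ℝ) ≤ ‖a + w‖ := by
  have hna : (0:ℝ) < ‖a‖ := norm_pos_iff.2 ha
  have h1 : (inner ℝ a (a + w) : ℝ) ≤ ‖a‖ * ‖a + w‖ := real_inner_le_norm _ _
  have h2 : (inner ℝ a (a + w) : ℝ) = ‖a‖^2 + inner ℝ a w := by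
    rw [inner_add_right, real_inner_self_eq_norm_sq]
  rw [real_inner_smul_left]
  have : ‖a‖^2 + (inner ℝ a w : ℝ) ≤ ‖a‖ * ‖a + w‖ := by rw [← h2]; exact h1
  have h3 := mul_le_mul_of_nonneg_left this (le_of_lt (inv_pos.2 hna))
  calc ‖a‖ + ‖a‖⁻¹ * (inner ℝ a w : ℝ)
      = ‖a‖⁻¹ * (‖a‖^2 + inner ℝ a w) := by field_simp
    _ ≤ ‖a‖⁻¹ * (‖a‖ * ‖a + w‖) := h3
    _ = ‖a + w‖ := by field_simp
-- ‖a/‖a‖ − c/‖c‖‖ ≤ 2‖a−c‖/‖a‖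

theorem aux_normalize_diff (a c : H) (ha : a ≠ 0) (hc : c ≠ 0) :
    ‖(‖a‖⁻¹ : ℝ) • a - (‖c‖⁻¹ : ℝ) • c‖ ≤ 2 * ‖a - c‖ / ‖a‖ := by
  have hna : (0:ℝ) < ‖a‖ := norm_pos_iff.2 ha
  have hnc : (0:ℝ) < ‖c‖ := norm_pos_iff.2 hc
  have key : (‖a‖⁻¹ : ℝ) • a - (‖c‖⁻¹ : ℝ) • c
      = (‖a‖⁻¹ : ℝ) • (a - c) + ((‖a‖⁻¹ : ℝ) - (‖c‖⁻¹ : ℝ)) • c := by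
    rw [smul_sub, sub_smul]; abel
  rw [key]
  have h1 : ‖(‖a‖⁻¹ : ℝ) • (a - c)‖ = ‖a - c‖ / ‖a‖ := by
    rw [norm_smul]; simp [abs_of_pos (inv_pos.2 hna)]; ring
  have h2 : ‖((‖a‖⁻¹ : ℝ) - (‖c‖⁻¹ : ℝ)) • c‖ ≤ ‖a - c‖ / ‖a‖ := by
    rw [norm_smul, Real.norm_eq_abs]
    have : |(‖a‖⁻¹ : ℝ) - ‖c‖⁻¹| = |‖c‖ - ‖a‖| / (‖a‖ * ‖c‖) := by
      rw [show (‖a‖⁻¹ : ℝ) - ‖c‖⁻¹ = (‖c‖ - ‖a‖) / (‖a‖ * ‖c‖) by field_simp]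
      rw [abs_div, abs_of_pos (mul_pos hna hnc)]
    rw [this]
    have h3 : |‖c‖ - ‖a‖| ≤ ‖a - c‖ := by
      rw [abs_sub_comm]; exact abs_norm_sub_norm_le a c
    calc |‖c‖ - ‖a‖| / (‖a‖ * ‖c‖) * ‖c‖ = |‖c‖ - ‖a‖| / ‖a‖ := by field_simp
      _ ≤ ‖a - c‖ / ‖a‖ := div_le_div_of_nonneg_right h3 hna.le
  calc ‖(‖a‖⁻¹ : ℝ) • (a - c) + ((‖a‖⁻¹ : ℝ) - (‖c‖⁻¹ : ℝ)) • c‖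
      ≤ ‖(‖a‖⁻¹ : ℝ) • (a - c)‖ + ‖((‖a‖⁻¹ : ℝ) - (‖c‖⁻¹ : ℝ)) • c‖ := norm_add_le _ _
    _ ≤ ‖a - c‖ / ‖a‖ + ‖a - c‖ / ‖a‖ := by rw [h1]; linarith
    _ = 2 * ‖a - c‖ / ‖a‖ := by ring

theorem aux_lip (S : Set H) (hne : S.Nonempty) (y : H) (w : H) :
    |infDist (y + w) S - infDist y S| ≤ ‖w‖ := by
  rw [abs_le]
  constructor
  · have : infDist y S ≤ infDist (y + w) S + dist y (y + w) := infDist_le_infDist_add_dist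
    have hd : dist y (y + w) = ‖w‖ := by
      rw [dist_eq_norm]; simp
    linarith
  · have : infDist (y + w) S ≤ infDist y S + dist (y + w) y := infDist_le_infDist_add_dist
    have hd : dist (y + w) y = ‖w‖ := by
      rw [dist_eq_norm]; simp
    linarith

theorem aux_Q_bounds (S : Set H) (hne : S.Nonempty) (u h : H) :
    (∀ᶠ p : H × ℝ in (nhds u ×ˢ nhdsWithin 0 (Ioi (0:ℝ))),
      (infDist (p.1 + p.2 • h) S - infDist p.1 S) / p.2 ≤ ‖h‖) ∧
    (∀ᶠ p : H × ℝ in (nhds u ×ˢ nhdsWithin 0 (Ioi (0:ℝ))),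
      -‖h‖ ≤ (infDist (p.1 + p.2 • h) S - infDist p.1 S) / p.2) := by
  have hev : ∀ᶠ p : H × ℝ in (nhds u ×ˢ nhdsWithin 0 (Ioi (0:ℝ))), 0 < p.2 := by
    filter_upwards [prod_mem_prod (univ_mem) (self_mem_nhdsWithin)] with p hp
    exact hp.2
  constructor
  · filter_upwards [hev] with p hp
    have := aux_lip S hne p.1 (p.2 • h)
    rw [norm_smul, Real.norm_eq_abs, abs_of_pos hp] at this
    rw [div_le_iff₀ hp]
    have := (abs_le.1 this).2
    linarith [this]
  · filter_upwards [hev] with p hp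
    have := aux_lip S hne p.1 (p.2 • h)
    rw [norm_smul, Real.norm_eq_abs, abs_of_pos hp] at this
    rw [le_div_iff₀ hp]
    have := (abs_le.1 this).1
    linarith [this]

theorem aux_upper (S : Set H) (hne : S.Nonempty) (hcl : IsClosed S)
    (hbc : ∀ r : ℝ, 0 < r → IsCompact (S ∩ closedBall (0:H) r))
    (u : H) (hu : u ∉ S) (h : H) :
    ∃ p ∈ projSet S u,
      clarkeDeriv (fun z => infDist z S) u h ≤ inner ℝ ((infDist u S)⁻¹ • (u - p)) h := by
  set d := infDist u S with hddef
  have hd : 0 < d := (hcl.notMem_iff_infDist_pos hne).1 hu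
  -- projSet S u is compact and nonempty
  have hPsub : projSet S u ⊆ S ∩ closedBall (0:H) (‖u‖ + d + 1) := by
    intro p hp
    refine ⟨hp.1, mem_closedBall.2 ?_⟩
    have hpu : ‖p‖ ≤ ‖u‖ + ‖u - p‖ := by
      have h0 := norm_sub_le u (u - p)
      rwa [sub_sub_cancel] at h0
    rw [dist_zero_right]
    rw [hp.2] at hpu
    linarith
  have hPclosed : IsClosed (projSet S u) := by
    have : projSet S u = S ∩ (fun y => ‖u - y‖) ⁻¹' {d} := by
      ext y
      simp only [projSet, mem_setOf_eq, mem_inter_iff, mem_preimage,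
        mem_singleton_iff, hddef]
    rw [this]
    exact hcl.inter (IsClosed.preimage (by continuity) isClosed_singleton)
  have hPc : IsCompact (projSet S u) :=
    (hbc (‖u‖ + d + 1) (by positivity)).of_isClosed_subset hPclosed hPsub
  have hPne : (projSet S u).Nonempty := aux_exists_proj S hne hbc u
  -- maximize g over projSet
  set g : H → ℝ := fun p => (inner ℝ ((d⁻¹ : ℝ) • (u - p)) h : ℝ) with hgdef
  have hgcont : ContinuousOn g (projSet S u) := by
    apply Continuous.continuousOn
    have : Continuous fun p : H => (d⁻¹ : ℝ) • (u - p) :=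
      (continuous_const.sub continuous_id).const_smul _
    exact Continuous.inner this continuous_const
  obtain ⟨p₀, hp₀mem, hp₀max⟩ := hPc.exists_isMaxOn hPne hgcont
  refine ⟨p₀, hp₀mem, ?_⟩
  refine le_of_forall_pos_le_add ?_
  intro ε hε
  set ε₁ : ℝ := ε * d / (16 * (‖h‖ + 1)) with hε₁def
  have hε₁ : 0 < ε₁ := by positivity
  obtain ⟨δ₀, hδ₀, husc⟩ := aux_usc S hbc u ε₁ hε₁
  set δ : ℝ := min δ₀ (min (d/4) ε₁) with hδdef
  have hδpos : 0 < δ := lt_min hδ₀ (lt_min (by positivity) hε₁)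
  set δ' : ℝ := min (d / (4 * (‖h‖ + 1))) (ε₁ / (‖h‖ + 1)) with hδ'def
  have hδ'pos : 0 < δ' := lt_min (by positivity) (by positivity)
  -- eventual bound
  have hev : ∀ᶠ pt : H × ℝ in (nhds u ×ˢ nhdsWithin 0 (Ioi (0:ℝ))),
      (infDist (pt.1 + pt.2 • h) S - infDist pt.1 S) / pt.2 ≤ g p₀ + ε := by
    filter_upwards [prod_mem_prod (ball_mem_nhds u hδpos)
      (Ioo_mem_nhdsGT_of_mem ⟨le_refl 0, hδ'pos⟩)] with pt hpt
    obtain ⟨hy, hτ⟩ := hpt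
    set y := pt.1
    set τ := pt.2
    have hτ0 : 0 < τ := hτ.1
    have hτδ : τ < δ' := hτ.2
    have hyu : dist y u < δ := mem_ball.1 hy
    obtain ⟨s, hsmem⟩ := aux_exists_proj S hne hbc y
    set a := y + τ • h - s with hadef
    have hys : ‖y - s‖ = infDist y S := hsmem.2
    have hinfy : d - δ ≤ infDist y S := by
      have h1 : infDist u S ≤ infDist y S + dist u y := infDist_le_infDist_add_dist
      rw [dist_comm] at h1
      linarith [hyu]
    have hτh : τ * ‖h‖ ≤ d / 4 := by
      have h1 : τ * ‖h‖ ≤ δ' * ‖h‖ :=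
        mul_le_mul_of_nonneg_right hτδ.le (norm_nonneg h)
      have h2 : δ' * ‖h‖ ≤ d / 4 := by
        have h3 : δ' ≤ d / (4 * (‖h‖ + 1)) := min_le_left _ _
        have h4 : δ' * ‖h‖ ≤ d / (4 * (‖h‖ + 1)) * (‖h‖ + 1) := by
          apply mul_le_mul h3 (by linarith [norm_nonneg h]) (norm_nonneg h)
          positivity
        have h5 : d / (4 * (‖h‖ + 1)) * (‖h‖ + 1) = d / 4 := by field_simp
        linarith
      linarith
    have hτhε : τ * ‖h‖ ≤ ε₁ := by
      have h1 : τ * ‖h‖ ≤ δ' * ‖h‖ :=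
        mul_le_mul_of_nonneg_right hτδ.le (norm_nonneg h)
      have h3 : δ' ≤ ε₁ / (‖h‖ + 1) := min_le_right _ _
      have h4 : δ' * ‖h‖ ≤ ε₁ / (‖h‖ + 1) * (‖h‖ + 1) := by
        apply mul_le_mul h3 (by linarith [norm_nonneg h]) (norm_nonneg h)
        positivity
      have h5 : ε₁ / (‖h‖ + 1) * (‖h‖ + 1) = ε₁ := by field_simp
      linarith
    have hδd : δ ≤ d / 4 := le_trans (min_le_right _ _) (min_le_left _ _)
    have hδε : δ ≤ ε₁ := le_trans (min_le_right _ _) (min_le_right _ _)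
    have hna : d / 2 ≤ ‖a‖ := by
      have h1 : ‖y - s‖ - ‖τ • h‖ ≤ ‖a‖ := by
        have : ‖y - s‖ ≤ ‖a‖ + ‖τ • h‖ := by
          calc ‖y - s‖ = ‖a - τ • h‖ := by congr 1; rw [hadef]; abel
            _ ≤ ‖a‖ + ‖τ • h‖ := norm_sub_le _ _
        linarith
      have h2 : ‖τ • h‖ = τ * ‖h‖ := by
        rw [norm_smul, Real.norm_eq_abs, abs_of_pos hτ0]
      rw [h2] at h1
      linarith
    have hane : a ≠ 0 := by
      intro hcon
      rw [hcon, norm_zero] at hna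
      linarith
    -- the difference quotient is at most ⟪â, h⟫
    have hQle : (infDist (y + τ • h) S - infDist y S) / τ
        ≤ (inner ℝ ((‖a‖⁻¹ : ℝ) • a) h : ℝ) := by
      have hup : infDist (y + τ • h) S ≤ ‖a‖ := by
        have := infDist_le_dist_of_mem (x := y + τ • h) hsmem.1
        rw [dist_eq_norm] at this
        exact this
      have hdown : ‖a‖ - τ * (inner ℝ ((‖a‖⁻¹ : ℝ) • a) h : ℝ) ≤ infDist y S := by
        have := aux_norm_add_ge a (-(τ • h)) hane
        have heq : a + -(τ • h) = y - s := by rw [hadef]; abel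
        rw [heq] at this
        rw [hys] at this
        have hin : (inner ℝ ((‖a‖⁻¹ : ℝ) • a) (-(τ • h)) : ℝ)
            = -(τ * (inner ℝ ((‖a‖⁻¹ : ℝ) • a) h : ℝ)) := by
          rw [inner_neg_right, real_inner_smul_right]
        rw [hin] at this
        linarith
      rw [div_le_iff₀ hτ0]
      have := sub_le_sub hup (hdown)
      calc infDist (y + τ • h) S - infDist y S
          ≤ ‖a‖ - (‖a‖ - τ * (inner ℝ ((‖a‖⁻¹ : ℝ) • a) h : ℝ)) := this
        _ = (inner ℝ ((‖a‖⁻¹ : ℝ) • a) h : ℝ) * τ := by ring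
    -- compare â with (u - p)/d for a nearby p ∈ projSet S u
    have hyu₀ : dist y u < δ₀ := lt_of_lt_of_le hyu (min_le_left _ _)
    obtain ⟨p, hpmem, hsp⟩ := husc y hyu₀ s hsmem
    have hupd : ‖u - p‖ = d := hpmem.2
    have hupne : u - p ≠ 0 := by
      intro hcon
      rw [hcon, norm_zero] at hupd
      linarith
    have hac : ‖a - (u - p)‖ ≤ 3 * ε₁ := by
      have key : a - (u - p) = (y - u) + τ • h + (p - s) := by rw [hadef]; abel
      have h2 : ‖τ • h‖ = τ * ‖h‖ := by
        rw [norm_smul, Real.norm_eq_abs, abs_of_pos hτ0]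
      have h3 : ‖y - u‖ < δ := by rw [← dist_eq_norm]; exact hyu
      have h4 : ‖p - s‖ < ε₁ := by rw [norm_sub_rev]; exact hsp
      calc ‖a - (u - p)‖ = ‖(y - u) + τ • h + (p - s)‖ := by rw [key]
        _ ≤ ‖(y - u) + τ • h‖ + ‖p - s‖ := norm_add_le _ _
        _ ≤ ‖y - u‖ + ‖τ • h‖ + ‖p - s‖ := by linarith [norm_add_le (y - u) (τ • h)]
        _ ≤ ε₁ + ε₁ + ε₁ := by rw [h2]; linarith
        _ = 3 * ε₁ := by ring
    have hdiff : ‖(‖a‖⁻¹ : ℝ) • a - (d⁻¹ : ℝ) • (u - p)‖ ≤ 12 * ε₁ / d := by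
      have := aux_normalize_diff a (u - p) hane hupne
      rw [hupd] at this
      have h6 : 2 * ‖a - (u - p)‖ / ‖a‖ ≤ 2 * (3 * ε₁) / (d / 2) := by
        apply div_le_div₀ (by positivity) (by linarith) (by linarith) hna
      have h7 : 2 * (3 * ε₁) / (d / 2) = 12 * ε₁ / d := by field_simp; ring
      linarith
    have hfin : (inner ℝ ((‖a‖⁻¹ : ℝ) • a) h : ℝ) ≤ g p + 12 * ε₁ / d * ‖h‖ := by
      have h8 : (inner ℝ ((‖a‖⁻¹ : ℝ) • a) h : ℝ)
          = (inner ℝ ((d⁻¹ : ℝ) • (u - p)) h : ℝ)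
            + (inner ℝ ((‖a‖⁻¹ : ℝ) • a - (d⁻¹ : ℝ) • (u - p)) h : ℝ) := by
        rw [inner_sub_left]; ring
      rw [h8]
      have h9 := real_inner_le_norm ((‖a‖⁻¹ : ℝ) • a - (d⁻¹ : ℝ) • (u - p)) h
      have h10 : ‖(‖a‖⁻¹ : ℝ) • a - (d⁻¹ : ℝ) • (u - p)‖ * ‖h‖
          ≤ 12 * ε₁ / d * ‖h‖ :=
        mul_le_mul_of_nonneg_right hdiff (norm_nonneg h)
      have : g p = (inner ℝ ((d⁻¹ : ℝ) • (u - p)) h : ℝ) := rfl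
      linarith
    have herr : 12 * ε₁ / d * ‖h‖ ≤ ε := by
      have hh1 : (0:ℝ) < ‖h‖ + 1 := by positivity
      have hd0 : d ≠ 0 := ne_of_gt hd
      have heq2 : 12 * ε₁ / d * ‖h‖ = ε * (12 * ‖h‖) / (16 * (‖h‖ + 1)) := by
        rw [hε₁def]; field_simp
      rw [heq2, div_le_iff₀ (by positivity)]
      nlinarith [norm_nonneg h, hε.le]
    have hgp : g p ≤ g p₀ := hp₀max hpmem
    calc (infDist (y + τ • h) S - infDist y S) / τ
        ≤ (inner ℝ ((‖a‖⁻¹ : ℝ) • a) h : ℝ) := hQle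
      _ ≤ g p + 12 * ε₁ / d * ‖h‖ := hfin
      _ ≤ g p₀ + ε := by linarith
  -- conclude with limsup_le_of_le
  have hcob : IsCoboundedUnder (· ≤ ·) (nhds u ×ˢ nhdsWithin 0 (Ioi (0:ℝ)))
      (fun pt : H × ℝ => (infDist (pt.1 + pt.2 • h) S - infDist pt.1 S) / pt.2) := by
    have hb := (aux_Q_bounds S hne u h).2
    have : IsBoundedUnder (· ≥ ·) (nhds u ×ˢ nhdsWithin 0 (Ioi (0:ℝ)))
        (fun pt : H × ℝ => (infDist (pt.1 + pt.2 • h) S - infDist pt.1 S) / pt.2) :=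
      isBoundedUnder_of_eventually_le (α := ℝᵒᵈ) hb
    exact this.isCoboundedUnder_flip
  exact limsup_le_of_le hcob hev

theorem aux_lower (S : Set H) (hne : S.Nonempty) (hcl : IsClosed S)
    (hbc : ∀ r : ℝ, 0 < r → IsCompact (S ∩ closedBall (0:H) r))
    (u : H) (hu : u ∉ S) (p : H) (hp : p ∈ projSet S u) (h : H) :
    (inner ℝ ((infDist u S)⁻¹ • (u - p)) h : ℝ)
      ≤ clarkeDeriv (fun z => infDist z S) u h := by
  set d := infDist u S with hddef
  have hd : 0 < d := (hcl.notMem_iff_infDist_pos hne).1 hu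
  set c : ℝ := (inner ℝ ((d⁻¹ : ℝ) • (u - p)) h : ℝ) with hcdef
  have key : ∀ ε > (0:ℝ), c - ε ≤ clarkeDeriv (fun z => infDist z S) u h := by
    intro ε hε
    have hbd : IsBoundedUnder (· ≤ ·) (nhds u ×ˢ nhdsWithin 0 (Ioi (0:ℝ)))
        (fun pt : H × ℝ => (infDist (pt.1 + pt.2 • h) S - infDist pt.1 S) / pt.2) :=
      isBoundedUnder_of_eventually_le (aux_Q_bounds S hne u h).1
    refine le_limsup_of_frequently_le ?_ hbd
    rw [Filter.frequently_iff]
    intro U hU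
    rw [Filter.mem_prod_iff] at hU
    obtain ⟨A, hA, B, hB, hAB⟩ := hU
    obtain ⟨δ, hδpos, hδball⟩ := Metric.mem_nhds_iff.1 hA
    obtain ⟨δ', hδ'pos, hδ'sub⟩ := mem_nhdsGT_iff_exists_Ioc_subset.1 hB
    have hδ'0 : (0:ℝ) < δ' := hδ'pos
    -- choose t and y on the segment
    set t : ℝ := min (1/2) (δ / (2 * (d + 1))) with htdef
    have ht0 : 0 < t := lt_min (by norm_num) (by positivity)
    have ht1 : t < 1 := lt_of_le_of_lt (min_le_left _ _) (by norm_num)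
    set y : H := u + t • (p - u) with hydef
    have hpu : ‖p - u‖ = d := by rw [norm_sub_rev]; exact hp.2
    have hyu : dist y u < δ := by
      rw [hydef, dist_eq_norm]
      have : u + t • (p - u) - u = t • (p - u) := by abel
      rw [this, norm_smul, Real.norm_eq_abs, abs_of_pos ht0, hpu]
      have h1 : t ≤ δ / (2 * (d + 1)) := min_le_right _ _
      have h2 : t * d ≤ δ / (2 * (d + 1)) * d :=
        mul_le_mul_of_nonneg_right h1 hd.le
      have h3 : δ / (2 * (d + 1)) * d < δ := by
        rw [div_mul_eq_mul_div, div_lt_iff₀ (by positivity)]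
        nlinarith
      linarith
    have hyA : y ∈ A := hδball (mem_ball.2 hyu)
    obtain ⟨hinfy, huniq⟩ := aux_seg S u p hp hd t ht0 ht1
    -- suppose for contradiction no good τ exists
    by_contra hcon
    push_neg at hcon
    have hcon' : ∀ τ ∈ Ioc (0:ℝ) δ',
        (infDist (y + τ • h) S - infDist y S) / τ < c - ε := by
      intro τ hτ
      exact hcon (y, τ) (hAB ⟨hyA, hδ'sub hτ⟩)
    -- sequence τ n ↓ 0
    set τ : ℕ → ℝ := fun n => δ' / (n + 1) with hτdef
    have hτpos : ∀ n, 0 < τ n := fun n => by positivity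
    have hτmem : ∀ n, τ n ∈ Ioc (0:ℝ) δ' := by
      intro n
      refine ⟨hτpos n, ?_⟩
      rw [hτdef]
      rw [div_le_iff₀ (by positivity)]
      nlinarith [Nat.cast_nonneg (α := ℝ) n, hδ'0]
    have hτ0 : Tendsto τ atTop (nhds 0) := by
      have h1 : Tendsto (fun n : ℕ => δ' * (1 / (n + 1))) atTop (nhds (δ' * 0)) :=
        tendsto_one_div_add_atTop_nhds_zero_nat.const_mul δ'
      simp only [mul_zero] at h1
      refine h1.congr fun n => by rw [hτdef]; ring
    set z : ℕ → H := fun n => y + τ n • h with hzdef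
    have hz : Tendsto z atTop (nhds y) := by
      have h1 : Tendsto (fun n => τ n • h) atTop (nhds ((0:ℝ) • h)) :=
        hτ0.smul_const h
      rw [zero_smul] at h1
      have h2 := (tendsto_const_nhds : Tendsto (fun _ : ℕ => y) atTop (nhds y)).add h1
      rw [add_zero] at h2
      exact h2
    choose s hs using fun n => aux_exists_proj S hne hbc (z n)
    obtain ⟨q, hqmem, φ, hφ, hconv⟩ := aux_proj_subseq S hbc z y hz s hs
    have hqp : q = p := huniq q hqmem
    -- b n := y - s n, the quotient bound
    have hinfypos : 0 < infDist y S := by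
      rw [hinfy]; have : 0 < 1 - t := by linarith
      positivity
    have hbne : ∀ n, y - s n ≠ 0 := by
      intro n hzero
      have h1 : infDist y S ≤ dist y (s n) := infDist_le_dist_of_mem (hs n).1
      rw [dist_eq_norm, hzero, norm_zero] at h1
      linarith
    have hQge : ∀ n, (inner ℝ ((‖y - s n‖⁻¹ : ℝ) • (y - s n)) h : ℝ)
        ≤ (infDist (y + τ n • h) S - infDist y S) / τ n := by
      intro n
      have h1 : infDist (z n) S = ‖z n - s n‖ := ((hs n).2).symm
      have h2 : z n - s n = (y - s n) + τ n • h := by show y + τ n • h - s n = _; abel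
      have h3 := aux_norm_add_ge (y - s n) (τ n • h) (hbne n)
      rw [← h2] at h3
      have h4 : infDist y S ≤ ‖y - s n‖ := by
        have := infDist_le_dist_of_mem (x := y) (hs n).1
        rwa [dist_eq_norm] at this
      have h5 : (inner ℝ ((‖y - s n‖⁻¹ : ℝ) • (y - s n)) (τ n • h) : ℝ)
          = τ n * inner ℝ ((‖y - s n‖⁻¹ : ℝ) • (y - s n)) h := real_inner_smul_right _ _ _
      rw [h5] at h3
      rw [le_div_iff₀ (hτpos n)]
      have : infDist (y + τ n • h) S = ‖z n - s n‖ := by rw [hzdef] at h1 ⊢; exact h1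
      rw [this]
      nlinarith [h3, h4]
    -- limit of the inner ℝ products
    have hbconv : Tendsto (fun n => y - s (φ n)) atTop (nhds (y - p)) := by
      have := (tendsto_const_nhds : Tendsto (fun _ : ℕ => y) atTop (nhds y)).sub hconv
      rw [hqp] at this
      exact this
    have hypne : y - p ≠ 0 := by
      intro hzero
      have : ‖y - p‖ = 0 := by rw [hzero, norm_zero]
      have h2 : y - p = (1 - t) • (u - p) := by rw [hydef]; module
      rw [h2, norm_smul, Real.norm_eq_abs, abs_of_pos (by linarith : (0:ℝ) < 1 - t),
        hp.2] at this
      nlinarith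
    have hnconv : Tendsto (fun n => (inner ℝ ((‖y - s (φ n)‖⁻¹ : ℝ) • (y - s (φ n))) h : ℝ))
        atTop (nhds (inner ℝ ((‖y - p‖⁻¹ : ℝ) • (y - p)) h)) := by
      have h1 : Tendsto (fun n => ‖y - s (φ n)‖) atTop (nhds ‖y - p‖) := hbconv.norm
      have h2 : Tendsto (fun n => (‖y - s (φ n)‖⁻¹ : ℝ)) atTop (nhds (‖y - p‖⁻¹ : ℝ)) :=
        h1.inv₀ (norm_ne_zero_iff.2 hypne)
      exact (h2.smul hbconv).inner tendsto_const_nhds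
    have hyplim : (inner ℝ ((‖y - p‖⁻¹ : ℝ) • (y - p)) h : ℝ) = c := by
      have h2 : y - p = (1 - t) • (u - p) := by rw [hydef]; module
      have h1t : (0:ℝ) < 1 - t := by linarith
      rw [hcdef, h2, norm_smul, Real.norm_eq_abs, abs_of_pos h1t, hp.2, smul_smul]
      congr 2
      have hdne : d ≠ 0 := ne_of_gt hd
      have h1t' : (1:ℝ) - t ≠ 0 := ne_of_gt h1t
      field_simp; exact div_self hdne
    -- contradiction
    have hle : ∀ n, (inner ℝ ((‖y - s (φ n)‖⁻¹ : ℝ) • (y - s (φ n))) h : ℝ) < c - ε := by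
      intro n
      exact lt_of_le_of_lt (hQge (φ n)) (hcon' (τ (φ n)) (hτmem (φ n)))
    have hfinal : (inner ℝ ((‖y - p‖⁻¹ : ℝ) • (y - p)) h : ℝ) ≤ c - ε :=
      le_of_tendsto hnconv (Eventually.of_forall fun n => (hle n).le)
    rw [hyplim] at hfinal
    linarith
  by_contra hcon
  push_neg at hcon
  have := key ((c - clarkeDeriv (fun z => infDist z S) u h) / 2) (by linarith)
  linarith

theorem aux_subdiff_convex (f : H → ℝ) (x : H) : Convex ℝ (clarkeSubdiff f x) := by
  intro v₁ hv₁ v₂ hv₂ a b ha hb hab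
  intro h
  have h1 : (inner ℝ (a • v₁ + b • v₂) h : ℝ) = a * inner ℝ v₁ h + b * inner ℝ v₂ h := by
    rw [inner_add_left, real_inner_smul_left, real_inner_smul_left]
  rw [h1]
  calc a * (inner ℝ v₁ h : ℝ) + b * inner ℝ v₂ h
      ≤ a * clarkeDeriv f x h + b * clarkeDeriv f x h := by
        have := mul_le_mul_of_nonneg_left (hv₁ h) ha
        have := mul_le_mul_of_nonneg_left (hv₂ h) hb
        linarith
    _ = clarkeDeriv f x h := by rw [← add_mul, hab, one_mul]

theorem aux_subdiff_closed (f : H → ℝ) (x : H) : IsClosed (clarkeSubdiff f x) := by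
  have : clarkeSubdiff f x = ⋂ h : H, {v : H | (inner ℝ v h : ℝ) ≤ clarkeDeriv f x h} := by
    ext v; simp [clarkeSubdiff, Set.mem_iInter, Set.mem_setOf_eq]
  rw [this]
  refine isClosed_iInter fun h => ?_
  exact isClosed_le (Continuous.inner continuous_id continuous_const) continuous_const

/-- Lemma 4.2: formula for the Clarke subdifferential of the distance function to a
ball-compact closed set at a point outside the set. -/
theorem clarke_subdiff_dist_eq_of_ball_compact
    {H : Type} [NormedAddCommGroup H] [InnerProductSpace ℝ H] [CompleteSpace H]
    [TopologicalSpace.SeparableSpace H]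
    (S : Set H) (hne : S.Nonempty) (hcl : IsClosed S)
    (hbc : ∀ r : ℝ, 0 < r → IsCompact (S ∩ closedBall (0:H) r))
    (u : H) (hu : u ∉ S) :
    clarkeSubdiff (fun z => infDist z S) u
      = (fun p => (infDist u S)⁻¹ • (u - p)) '' closure (convexHull ℝ (projSet S u)) := by
  set d := infDist u S with hddef
  have hd : 0 < d := (hcl.notMem_iff_infDist_pos hne).1 hu
  have hdne : d ≠ 0 := ne_of_gt hd
  set T : H → H := fun p => (d⁻¹ : ℝ) • (u - p) with hTdef
  set C : Set H := closure (convexHull ℝ (projSet S u)) with hCdef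
  have hTaff : ∀ (a b : ℝ) (q₁ q₂ : H), a + b = 1 →
      a • T q₁ + b • T q₂ = T (a • q₁ + b • q₂) := by
    intro a b q₁ q₂ hab
    have : a • T q₁ + b • T q₂ = (d⁻¹ : ℝ) • ((a + b) • u - (a • q₁ + b • q₂)) := by
      simp only [hTdef]; module
    rw [this, hab, one_smul]
  have hCconv : Convex ℝ C := (convex_convexHull ℝ _).closure
  apply Set.Subset.antisymm
  · -- hard direction via separation
    intro v hv
    by_contra hvK
    -- K is convex
    have hKconv : Convex ℝ (T '' C) := by
      rintro _ ⟨q₁, hq₁, rfl⟩ _ ⟨q₂, hq₂, rfl⟩ a b ha hb hab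
      exact ⟨a • q₁ + b • q₂, hCconv hq₁ hq₂ ha hb hab, (hTaff a b q₁ q₂ hab).symm⟩
    -- K is closed (T is a homeomorphism)
    have hKclosed : IsClosed (T '' C) := by
      have hne' : (-(d⁻¹) : ℝ) ≠ 0 := by simp [hdne]
      set e : H ≃ₜ H :=
        (Homeomorph.smulOfNeZero (-(d⁻¹) : ℝ) hne').trans
          (Homeomorph.addLeft ((d⁻¹ : ℝ) • u)) with hedef
      have heq : T '' C = e '' C := by
        apply Set.image_congr'
        intro q
        show (d⁻¹ : ℝ) • (u - q) = (d⁻¹ : ℝ) • u + (-(d⁻¹) : ℝ) • q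
        module
      rw [heq]
      exact e.isClosedMap C isClosed_closure
    obtain ⟨f, c, hfa, hfc⟩ := geometric_hahn_banach_closed_point hKconv hKclosed hvK
    set w : H := (InnerProductSpace.toDual ℝ H).symm f with hwdef
    have hwinner : ∀ x : H, (inner ℝ w x : ℝ) = f x := by
      intro x
      rw [hwdef]
      exact InnerProductSpace.toDual_symm_apply
    obtain ⟨p₀, hp₀mem, hp₀⟩ := aux_upper S hne hcl hbc u hu w
    have hp₀C : p₀ ∈ C := subset_closure (subset_convexHull ℝ _ hp₀mem)
    have hTp₀K : T p₀ ∈ T '' C := Set.mem_image_of_mem T hp₀C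
    have h1 : (inner ℝ v w : ℝ) ≤ inner ℝ ((d⁻¹ : ℝ) • (u - p₀)) w :=
      le_trans (hv w) hp₀
    have h2 : (inner ℝ ((d⁻¹ : ℝ) • (u - p₀)) w : ℝ) = f (T p₀) := by
      rw [← hwinner (T p₀), real_inner_comm]
    have h3 : f (T p₀) < c := hfa _ hTp₀K
    have h4 : c < f v := hfc
    have h5 : f v = (inner ℝ v w : ℝ) := by rw [← hwinner v, real_inner_comm]
    linarith [h1, h2 ▸ h1]
  · -- easy direction
    rintro _ ⟨q, hq, rfl⟩
    have hpre_closed : IsClosed (T ⁻¹' clarkeSubdiff (fun z => infDist z S) u) := by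
      have hTcont : Continuous T :=
        (continuous_const.sub continuous_id).const_smul _
      exact (aux_subdiff_closed _ u).preimage hTcont
    have hpre_conv : Convex ℝ (T ⁻¹' clarkeSubdiff (fun z => infDist z S) u) := by
      intro q₁ hq₁ q₂ hq₂ a b ha hb hab
      have := aux_subdiff_convex (fun z => infDist z S) u hq₁ hq₂ ha hb hab
      rw [Set.mem_preimage, ← hTaff a b q₁ q₂ hab]
      exact this
    have hP : projSet S u ⊆ T ⁻¹' clarkeSubdiff (fun z => infDist z S) u := by
      intro p hp
      rw [Set.mem_preimage]
      intro h
      exact aux_lower S hne hcl hbc u hu p hp h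
    have hhull : convexHull ℝ (projSet S u)
        ⊆ T ⁻¹' clarkeSubdiff (fun z => infDist z S) u :=
      convexHull_min hP hpre_conv
    have hclos : C ⊆ T ⁻¹' clarkeSubdiff (fun z => infDist z S) u :=
      closure_minimal hhull hpre_closed
    exact hclos hq


end
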